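/- The 12 quadratic forms in 12 variables x_0,...,x_11 listed as: x_6x_10 − x_5x_11, x_1x_10 − x_4x_10 + x_3x_11, x_6x_8 − x_2x_11, x_5x_8 − x_2x_10, x_3x_8 − x_0x_10, x_1x_8 − x_4x_8 + x_0x_11, x_6x_7 − x_1x_9 + x_4x_9 − x_4x_11, x_5x_7 + x_3x_9 − x_4x_10, x_2x_7 − x_4x_8 + x_0x_9, x_1x_5 − x_4x_5 + x_3x_6, x_2x_3 − x_0x_5, x_1x_2 − x_2x_4 + x_0x_6 define a birational map ω : P^11 ⇢ P^11 whose inverse is also given by 12 quadratic forms; specifically, substituting the 12 listed forms of ω into the 12 quadratic forms of the claimed inverse (as listed in equation (2)) yields a tuple of the form (x_0·T, ..., x_11·T) for a single nonzero homogeneous polynomial T of degree 3. -/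
import Mathlib


open MvPolynomial

noncomputable section

/-- Coordinates `x₀, …, x₁₁` on `ℙ¹¹`. -/
abbrev xP11 : Fin 12 → MvPolynomial (Fin 12) ℚ := X

/-- The 12 quadrics of equation (1), defining the Cremona map `ω : ℙ¹¹ ⇢ ℙ¹¹`. -/
def omegaP11 : Fin 12 → MvPolynomial (Fin 12) ℚ :=
  ![xP11 6 * xP11 10 - xP11 5 * xP11 11,
    xP11 1 * xP11 10 - xP11 4 * xP11 10 + xP11 3 * xP11 11,
    xP11 6 * xP11 8 - xP11 2 * xP11 11,
    xP11 5 * xP11 8 - xP11 2 * xP11 10,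
    xP11 3 * xP11 8 - xP11 0 * xP11 10,
    xP11 1 * xP11 8 - xP11 4 * xP11 8 + xP11 0 * xP11 11,
    xP11 6 * xP11 7 - xP11 1 * xP11 9 + xP11 4 * xP11 9 - xP11 4 * xP11 11,
    xP11 5 * xP11 7 + xP11 3 * xP11 9 - xP11 4 * xP11 10,
    xP11 2 * xP11 7 - xP11 4 * xP11 8 + xP11 0 * xP11 9,
    xP11 1 * xP11 5 - xP11 4 * xP11 5 + xP11 3 * xP11 6,
    xP11 2 * xP11 3 - xP11 0 * xP11 5,
    xP11 1 * xP11 2 - xP11 2 * xP11 4 + xP11 0 * xP11 6]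

/-- The 12 quadrics of equation (2), the claimed inverse `ω⁻¹`. -/
def omegaInvP11 : Fin 12 → MvPolynomial (Fin 12) ℚ :=
  ![-(xP11 5 * xP11 10) + xP11 4 * xP11 11,
    xP11 5 * xP11 9 - xP11 8 * xP11 9 + xP11 6 * xP11 10 - xP11 1 * xP11 11 +
      xP11 7 * xP11 11,
    xP11 2 * xP11 10 + xP11 3 * xP11 11,
    xP11 4 * xP11 9 - xP11 1 * xP11 10,
    -(xP11 8 * xP11 9) + xP11 6 * xP11 10 + xP11 7 * xP11 11,
    xP11 3 * xP11 9 + xP11 0 * xP11 10,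
    xP11 2 * xP11 9 - xP11 0 * xP11 11,
    xP11 4 * xP11 6 + xP11 5 * xP11 7 - xP11 1 * xP11 8,
    xP11 2 * xP11 4 + xP11 3 * xP11 5,
    -(xP11 3 * xP11 6) + xP11 2 * xP11 7 - xP11 0 * xP11 8,
    xP11 1 * xP11 3 + xP11 0 * xP11 4,
    xP11 1 * xP11 2 - xP11 0 * xP11 5]

abbrev TP11 : MvPolynomial (Fin 12) ℚ :=
  X 1*X 5*X 8 - X 4*X 5*X 8 + X 3*X 6*X 8 + X 2*X 4*X 10 - X 1*X 2*X 10 - X 0*X 6*X 10 - X 2*X 3*X 11 + X 0*X 5*X 11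

lemma TP11_ne : TP11 ≠ 0 := by
  intro h
  have h2 := congrArg (eval (fun i : Fin 12 => if i = 1 ∨ i = 5 ∨ i = 8 then (1:ℚ) else 0)) h
  simp [TP11] at h2

lemma TP11_hom : TP11.IsHomogeneous 3 := by
  have h3 : ∀ a b c : Fin 12,
      ((X a * X b * X c : MvPolynomial (Fin 12) ℚ)).IsHomogeneous 3 := fun a b c =>
    ((isHomogeneous_X _ _).mul (isHomogeneous_X _ _)).mul (isHomogeneous_X _ _)
  exact ((((((((h3 1 5 8).sub (h3 4 5 8)).add (h3 3 6 8)).add (h3 2 4 10)).sub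
    (h3 1 2 10)).sub (h3 0 6 10)).sub (h3 2 3 11)).add (h3 0 5 11))

lemma pom0 : omegaP11 0 = xP11 6 * xP11 10 - xP11 5 * xP11 11 := rfl
lemma pom1 : omegaP11 1 = xP11 1 * xP11 10 - xP11 4 * xP11 10 + xP11 3 * xP11 11 := rfl
lemma pom2 : omegaP11 2 = xP11 6 * xP11 8 - xP11 2 * xP11 11 := rfl
lemma pom3 : omegaP11 3 = xP11 5 * xP11 8 - xP11 2 * xP11 10 := rfl
lemma pom4 : omegaP11 4 = xP11 3 * xP11 8 - xP11 0 * xP11 10 := rfl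
lemma pom5 : omegaP11 5 = xP11 1 * xP11 8 - xP11 4 * xP11 8 + xP11 0 * xP11 11 := rfl
lemma pom6 : omegaP11 6 = xP11 6 * xP11 7 - xP11 1 * xP11 9 + xP11 4 * xP11 9 - xP11 4 * xP11 11 := rfl
lemma pom7 : omegaP11 7 = xP11 5 * xP11 7 + xP11 3 * xP11 9 - xP11 4 * xP11 10 := rfl
lemma pom8 : omegaP11 8 = xP11 2 * xP11 7 - xP11 4 * xP11 8 + xP11 0 * xP11 9 := rfl
lemma pom9 : omegaP11 9 = xP11 1 * xP11 5 - xP11 4 * xP11 5 + xP11 3 * xP11 6 := rfl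
lemma pom10 : omegaP11 10 = xP11 2 * xP11 3 - xP11 0 * xP11 5 := rfl
lemma pom11 : omegaP11 11 = xP11 1 * xP11 2 - xP11 2 * xP11 4 + xP11 0 * xP11 6 := rfl

lemma e0 : aeval omegaP11 (omegaInvP11 0) = X 0 * TP11 := by
  rw [show omegaInvP11 0 = -(xP11 5 * xP11 10) + xP11 4 * xP11 11 from rfl]
  simp only [xP11, TP11, map_add, map_sub, map_neg, map_mul, aeval_X,
    pom0, pom1, pom2, pom3, pom4, pom5, pom6, pom7, pom8, pom9, pom10, pom11]
  ring

lemma e1 : aeval omegaP11 (omegaInvP11 1) = X 1 * TP11 := by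
  rw [show omegaInvP11 1 = xP11 5 * xP11 9 - xP11 8 * xP11 9 + xP11 6 * xP11 10 - xP11 1 * xP11 11 + xP11 7 * xP11 11 from rfl]
  simp only [xP11, TP11, map_add, map_sub, map_neg, map_mul, aeval_X,
    pom0, pom1, pom2, pom3, pom4, pom5, pom6, pom7, pom8, pom9, pom10, pom11]
  ring

lemma e2 : aeval omegaP11 (omegaInvP11 2) = X 2 * TP11 := by
  rw [show omegaInvP11 2 = xP11 2 * xP11 10 + xP11 3 * xP11 11 from rfl]
  simp only [xP11, TP11, map_add, map_sub, map_neg, map_mul, aeval_X,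
    pom0, pom1, pom2, pom3, pom4, pom5, pom6, pom7, pom8, pom9, pom10, pom11]
  ring

lemma e3 : aeval omegaP11 (omegaInvP11 3) = X 3 * TP11 := by
  rw [show omegaInvP11 3 = xP11 4 * xP11 9 - xP11 1 * xP11 10 from rfl]
  simp only [xP11, TP11, map_add, map_sub, map_neg, map_mul, aeval_X,
    pom0, pom1, pom2, pom3, pom4, pom5, pom6, pom7, pom8, pom9, pom10, pom11]
  ring

lemma e4 : aeval omegaP11 (omegaInvP11 4) = X 4 * TP11 := by
  rw [show omegaInvP11 4 = -(xP11 8 * xP11 9) + xP11 6 * xP11 10 + xP11 7 * xP11 11 from rfl]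
  simp only [xP11, TP11, map_add, map_sub, map_neg, map_mul, aeval_X,
    pom0, pom1, pom2, pom3, pom4, pom5, pom6, pom7, pom8, pom9, pom10, pom11]
  ring

lemma e5 : aeval omegaP11 (omegaInvP11 5) = X 5 * TP11 := by
  rw [show omegaInvP11 5 = xP11 3 * xP11 9 + xP11 0 * xP11 10 from rfl]
  simp only [xP11, TP11, map_add, map_sub, map_neg, map_mul, aeval_X,
    pom0, pom1, pom2, pom3, pom4, pom5, pom6, pom7, pom8, pom9, pom10, pom11]
  ring

lemma e6 : aeval omegaP11 (omegaInvP11 6) = X 6 * TP11 := by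
  rw [show omegaInvP11 6 = xP11 2 * xP11 9 - xP11 0 * xP11 11 from rfl]
  simp only [xP11, TP11, map_add, map_sub, map_neg, map_mul, aeval_X,
    pom0, pom1, pom2, pom3, pom4, pom5, pom6, pom7, pom8, pom9, pom10, pom11]
  ring

lemma e7 : aeval omegaP11 (omegaInvP11 7) = X 7 * TP11 := by
  rw [show omegaInvP11 7 = xP11 4 * xP11 6 + xP11 5 * xP11 7 - xP11 1 * xP11 8 from rfl]
  simp only [xP11, TP11, map_add, map_sub, map_neg, map_mul, aeval_X,
    pom0, pom1, pom2, pom3, pom4, pom5, pom6, pom7, pom8, pom9, pom10, pom11]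
  ring

lemma e8 : aeval omegaP11 (omegaInvP11 8) = X 8 * TP11 := by
  rw [show omegaInvP11 8 = xP11 2 * xP11 4 + xP11 3 * xP11 5 from rfl]
  simp only [xP11, TP11, map_add, map_sub, map_neg, map_mul, aeval_X,
    pom0, pom1, pom2, pom3, pom4, pom5, pom6, pom7, pom8, pom9, pom10, pom11]
  ring

lemma e9 : aeval omegaP11 (omegaInvP11 9) = X 9 * TP11 := by
  rw [show omegaInvP11 9 = -(xP11 3 * xP11 6) + xP11 2 * xP11 7 - xP11 0 * xP11 8 from rfl]
  simp only [xP11, TP11, map_add, map_sub, map_neg, map_mul, aeval_X,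
    pom0, pom1, pom2, pom3, pom4, pom5, pom6, pom7, pom8, pom9, pom10, pom11]
  ring

lemma e10 : aeval omegaP11 (omegaInvP11 10) = X 10 * TP11 := by
  rw [show omegaInvP11 10 = xP11 1 * xP11 3 + xP11 0 * xP11 4 from rfl]
  simp only [xP11, TP11, map_add, map_sub, map_neg, map_mul, aeval_X,
    pom0, pom1, pom2, pom3, pom4, pom5, pom6, pom7, pom8, pom9, pom10, pom11]
  ring

lemma e11 : aeval omegaP11 (omegaInvP11 11) = X 11 * TP11 := by
  rw [show omegaInvP11 11 = xP11 1 * xP11 2 - xP11 0 * xP11 5 from rfl]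
  simp only [xP11, TP11, map_add, map_sub, map_neg, map_mul, aeval_X,
    pom0, pom1, pom2, pom3, pom4, pom5, pom6, pom7, pom8, pom9, pom10, pom11]
  ring


/-- The 12 quadrics of equation (1) define a birational self-map `ω` of `ℙ¹¹` whose
inverse is given by the 12 quadrics of equation (2): substituting the forms of `ω` into
those of `ω⁻¹` yields `(x₀·T, …, x₁₁·T)` for a single nonzero homogeneous cubic `T`. -/
theorem cremonaP11_inverse :
    ∃ T : MvPolynomial (Fin 12) ℚ, T ≠ 0 ∧ T.IsHomogeneous 3 ∧
      ∀ i : Fin 12, aeval omegaP11 (omegaInvP11 i) = X i * T := by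
  refine ⟨TP11, TP11_ne, TP11_hom, ?_⟩
  intro i
  fin_cases i
  exacts [e0, e1, e2, e3, e4, e5, e6, e7, e8, e9, e10, e11]

end
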